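/- Let p be a prime and K a field of characteristic p. A polynomial f ∈ K[t] satisfies f(t - 1) = f(t) (as polynomials) if and only if f is a polynomial in t^p - t, i.e., f lies in the subring K[t^p - t]. -/

import Mathlib

open Polynomial

private lemma aux_dvd {p : ℕ} [Fact p.Prime] {K : Type*} [Field K] [CharP K p] {f : K[X]}
    (hf : f.comp (X - 1) = f) (h0 : f.natDegree ≠ 0) : p ∣ f.natDegree := by
  have hd1 : 1 ≤ f.natDegree := Nat.one_le_iff_ne_zero.mpr h0
  have ht : taylor (-1) f = f := by
    rw [taylor_apply, map_neg, map_one]; exact hf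
  have hcoeff : (taylor (-1) f).coeff (f.natDegree - 1) = f.coeff (f.natDegree - 1) := by rw [ht]
  rw [taylor_coeff] at hcoeff
  have hdeg : (hasseDeriv (f.natDegree - 1) f).natDegree ≤ 1 := by
    refine (natDegree_hasseDeriv_le f (f.natDegree - 1)).trans ?_
    omega
  have h1 : (hasseDeriv (f.natDegree - 1) f).coeff 1 = (f.natDegree : K) * f.coeff f.natDegree := by
    rw [hasseDeriv_coeff]
    have e1 : 1 + (f.natDegree - 1) = f.natDegree := by omega
    rw [e1, Nat.choose_symm hd1, Nat.choose_one_right]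
  have h0' : (hasseDeriv (f.natDegree - 1) f).coeff 0 = f.coeff (f.natDegree - 1) := by
    rw [hasseDeriv_coeff, Nat.zero_add, Nat.choose_self, Nat.cast_one, one_mul]
  have heval : eval (-1) (hasseDeriv (f.natDegree - 1) f) =
      -(hasseDeriv (f.natDegree - 1) f).coeff 1 + (hasseDeriv (f.natDegree - 1) f).coeff 0 := by
    conv_lhs => rw [eq_X_add_C_of_natDegree_le_one hdeg]
    rw [eval_add, eval_mul, eval_C, eval_C, eval_X]; ring
  rw [heval, h1, h0'] at hcoeff
  have hz : (f.natDegree : K) * f.coeff f.natDegree = 0 := by linear_combination -hcoeff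
  have hfne : f ≠ 0 := fun h => h0 (by rw [h, natDegree_zero])
  have hc : (f.natDegree : K) = 0 := by
    rcases mul_eq_zero.mp hz with h' | h'
    · exact h'
    · exact absurd h' (mt leadingCoeff_eq_zero.mp hfne)
  exact (CharP.cast_eq_zero_iff K p f.natDegree).mp hc

private lemma aux_mem {p : ℕ} [Fact p.Prime] {K : Type*} [Field K] [CharP K p] :
    ∀ (n : ℕ) (f : K[X]), f.natDegree ≤ n → f.comp (X - 1) = f →
      f ∈ Algebra.adjoin K ({X ^ p - X} : Set K[X]) := by
  have hp1 : 1 < p := (Fact.out : p.Prime).one_lt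
  have hgmon : (X ^ p - X : K[X]).Monic := by
    apply (monic_X_pow p).sub_of_left
    rw [degree_X_pow, degree_X]
    exact_mod_cast hp1
  have hgdeg : (X ^ p - X : K[X]).degree = p := by
    rw [degree_sub_eq_left_of_degree_lt, degree_X_pow]
    rw [degree_X_pow, degree_X]
    exact_mod_cast hp1
  have hgnat : (X ^ p - X : K[X]).natDegree = p := natDegree_eq_of_degree_eq_some hgdeg
  have hgcomp : (X ^ p - X : K[X]).comp (X - 1) = X ^ p - X := by
    rw [sub_comp, X_comp, pow_comp, X_comp, sub_pow_char, one_pow]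
    ring
  have hX1 : (X - 1 : K[X]).natDegree = 1 := by
    rw [show (X - 1 : K[X]) = X - C 1 by rw [map_one], natDegree_X_sub_C]
  intro n
  induction n using Nat.strong_induction_on with
  | _ n ih =>
    intro f hn hf
    by_cases hsmall : f.natDegree < p
    · have h0 : f.natDegree = 0 := by
        by_contra h0
        have := aux_dvd (p := p) hf h0
        have := Nat.le_of_dvd (Nat.pos_of_ne_zero h0) this
        omega
      rw [eq_C_of_natDegree_eq_zero h0]
      exact Subalgebra.algebraMap_mem _ _
    · push_neg at hsmall
      set g : K[X] := X ^ p - X with hg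
      have hdiv : f %ₘ g + g * (f /ₘ g) = f := modByMonic_add_div f g
      have hrdeg : (f %ₘ g).degree < g.degree := degree_modByMonic_lt f hgmon
      have hrnat : (f %ₘ g).natDegree < p := by
        rcases eq_or_ne (f %ₘ g) 0 with h | h
        · rw [h, natDegree_zero]; omega
        · have := natDegree_lt_natDegree h hrdeg
          omega
      have hcomp : (f %ₘ g).comp (X - 1) + g * (f /ₘ g).comp (X - 1) = f := by
        conv_rhs => rw [← hf]
        conv_rhs => rw [← hdiv]
        rw [add_comp, mul_comp, hg, hgcomp]
      have hrcdeg : ((f %ₘ g).comp (X - 1)).degree < g.degree := by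
        refine lt_of_le_of_lt (degree_le_natDegree) ?_
        rw [natDegree_comp, hX1, mul_one, hgdeg]
        exact_mod_cast hrnat
      obtain ⟨hq', hr'⟩ := div_modByMonic_unique ((f /ₘ g).comp (X - 1))
        ((f %ₘ g).comp (X - 1)) hgmon ⟨hcomp, hrcdeg⟩
      -- hq' : f /ₘ g = (f /ₘ g).comp (X - 1), hr' : f %ₘ g = (f %ₘ g).comp (X - 1)
      have hqper : (f /ₘ g).comp (X - 1) = f /ₘ g := hq'.symm
      have hrper : (f %ₘ g).comp (X - 1) = f %ₘ g := hr'.symm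
      have hr0 : (f %ₘ g).natDegree = 0 := by
        by_contra h0
        have := aux_dvd (p := p) hrper h0
        have := Nat.le_of_dvd (Nat.pos_of_ne_zero h0) this
        omega
      have hqdeg : (f /ₘ g).natDegree < n := by
        rw [natDegree_divByMonic f hgmon, hgnat]
        omega
      have hqmem := ih _ hqdeg (f /ₘ g) le_rfl hqper
      have hrmem : f %ₘ g ∈ Algebra.adjoin K ({X ^ p - X} : Set K[X]) := by
        rw [eq_C_of_natDegree_eq_zero hr0]
        exact Subalgebra.algebraMap_mem _ _
      have hgmem : g ∈ Algebra.adjoin K ({X ^ p - X} : Set K[X]) :=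
        Algebra.subset_adjoin rfl
      rw [← hdiv]
      exact add_mem hrmem (mul_mem hgmem hqmem)

theorem periodic_iff_mem_adjoin {p : ℕ} [Fact p.Prime] {K : Type*} [Field K] [CharP K p]
    (f : K[X]) :
    f.comp (X - 1) = f ↔ f ∈ Algebra.adjoin K ({X ^ p - X} : Set K[X]) := by
  constructor
  · intro hf
    exact aux_mem f.natDegree f le_rfl hf
  · intro hf
    have hgcomp : (X ^ p - X : K[X]).comp (X - 1) = X ^ p - X := by
      rw [sub_comp, X_comp, pow_comp, X_comp, sub_pow_char, one_pow]
      ring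
    induction hf using Algebra.adjoin_induction with
    | mem x hx =>
      rw [Set.mem_singleton_iff.mp hx]
      exact hgcomp
    | algebraMap c => simp
    | add x y _ _ hx hy => rw [add_comp, hx, hy]
    | mul x y _ _ hx hy => rw [mul_comp, hx, hy]
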